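/- Let H be a self-adjoint operator on a Hilbert space, V a finite-rank self-adjoint operator, and z a non-real complex number. Then the operator R_z(H)V = (H−z)⁻¹V has no nonzero real eigenvalues, and (R_z(H)V)²f = 0 implies R_z(H)Vf = 0; i.e. R_z(H)V belongs to the class R. -/

import Mathlib

open ContinuousLinearMap Complex

local notation "⟪" x ", " y "⟫" => @inner ℂ _ _ x y

/-- For a self-adjoint operator `T`, the inner product `⟪T w, w⟫` is real. -/
lemma im_inner_apply_self_eq_zero
    {E : Type*} [NormedAddCommGroup E] [InnerProductSpace ℂ E] [CompleteSpace E]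
    (T : E →L[ℂ] E) (hT : IsSelfAdjoint T) (w : E) : (⟪T w, w⟫).im = 0 := by
  have hs : (T : E →ₗ[ℂ] E).IsSymmetric :=
    (ContinuousLinearMap.isSelfAdjoint_iff_isSymmetric).mp hT
  have h1 : ⟪T w, w⟫ = ⟪w, T w⟫ := hs w w
  have h2 : ⟪w, T w⟫ = (starRingEnd ℂ) ⟪T w, w⟫ := (inner_conj_symm _ _).symm
  have : ⟪T w, w⟫ = (starRingEnd ℂ) ⟪T w, w⟫ := h1.trans h2
  have := congrArg Complex.im this
  simpa using by linarith [this, Complex.conj_im (⟪T w, w⟫)]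

/-- Key computation: the imaginary part of `⟪u, R u⟫` where `R = (H - z)⁻¹`. -/
lemma im_inner_resolvent
    {E : Type*} [NormedAddCommGroup E] [InnerProductSpace ℂ E] [CompleteSpace E]
    (H : E →L[ℂ] E) (hH : IsSelfAdjoint H) (z : ℂ)
    (hu : IsUnit (H - z • 1)) (u : E) :
    (⟪u, (Ring.inverse (H - z • 1)) u⟫).im
      = z.im * ‖(Ring.inverse (H - z • 1)) u‖ ^ 2 := by
  set R : E →L[ℂ] E := Ring.inverse (H - z • 1) with hR
  set w : E := R u with hw
  have hRr : (H - z • 1) * R = 1 := Ring.mul_inverse_cancel _ hu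
  have hu' : (H - z • 1) w = u := by
    have := congrArg (fun T : E →L[ℂ] E => T u) hRr
    simpa [hw] using this
  have happ : u = H w - z • w := by
    rw [← hu']; simp [ContinuousLinearMap.sub_apply, ContinuousLinearMap.smul_apply]
  have : ⟪u, w⟫ = ⟪H w, w⟫ - (starRingEnd ℂ) z * ⟪w, w⟫ := by
    rw [happ, inner_sub_left, inner_smul_left]
  have himH : (⟪H w, w⟫).im = 0 := im_inner_apply_self_eq_zero H hH w
  have hww : ⟪w, w⟫ = (‖w‖ ^ 2 : ℝ) := by
    rw [inner_self_eq_norm_sq_to_K]; norm_num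
  rw [this, hww]
  simp [Complex.sub_im, Complex.mul_im, himH, Complex.conj_im, Complex.conj_re,
    Complex.ofReal_re, Complex.ofReal_im, ← Complex.ofReal_pow]

theorem resolvent_mul_selfAdjoint_memR
    {E : Type*} [NormedAddCommGroup E] [InnerProductSpace ℂ E] [CompleteSpace E]
    (H V : E →L[ℂ] E) (hH : IsSelfAdjoint H) (hV : IsSelfAdjoint V)
    (hVfr : FiniteDimensional ℂ ↥(LinearMap.range (V : E →ₗ[ℂ] E)))
    (z : ℂ) (hz : z.im ≠ 0) :
    (∀ μ : ℂ, μ.im = 0 → μ ≠ 0 →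
        ¬Module.End.HasEigenvalue
          ((Ring.inverse (H - z • 1) * V : E →L[ℂ] E) : E →ₗ[ℂ] E) μ) ∧
      ∀ f : E, (Ring.inverse (H - z • 1) * V) ((Ring.inverse (H - z • 1) * V) f) = 0 →
        (Ring.inverse (H - z • 1) * V) f = 0 := by
  set R : E →L[ℂ] E := Ring.inverse (H - z • 1) with hR
  by_cases hu : IsUnit (H - z • 1)
  · -- unit case
    have hRr : (H - z • 1) * R = 1 := Ring.mul_inverse_cancel _ hu
    constructor
    · intro μ hμim hμ0 heig
      obtain ⟨f, hf⟩ := heig.exists_hasEigenvector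
      have hf0 : f ≠ 0 := hf.right
      have happ : R (V f) = μ • f := by
        have := hf.apply_eq_smul
        simpa [ContinuousLinearMap.mul_apply] using this
      -- apply (H - z•1)
      have hVf : V f = μ • ((H - z • 1) f) := by
        have := congrArg (fun x => (H - z • 1) x) happ
        simp only [map_smul] at this
        rw [← this]
        have h1 := congrArg (fun T : E →L[ℂ] E => T (V f)) hRr
        simpa using h1.symm
      -- take inner products with f
      have hinner : ⟪f, V f⟫ = μ * (⟪f, H f⟫ - z * (‖f‖ ^ 2 : ℝ)) := by
        rw [hVf, inner_smul_right]
        congr 1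
        rw [show (H - z • 1) f = H f - z • f by
          simp [ContinuousLinearMap.sub_apply, ContinuousLinearMap.smul_apply]]
        rw [inner_sub_right, inner_smul_right, inner_self_eq_norm_sq_to_K]
        norm_num
      have himV : (⟪f, V f⟫).im = 0 := by
        have h1 : (⟪V f, f⟫).im = 0 := im_inner_apply_self_eq_zero V hV f
        have h2 : ⟪f, V f⟫ = (starRingEnd ℂ) ⟪V f, f⟫ := (inner_conj_symm _ _).symm
        rw [h2, Complex.conj_im, h1, neg_zero]
      have himH : (⟪f, H f⟫).im = 0 := by
        have h1 : (⟪H f, f⟫).im = 0 := im_inner_apply_self_eq_zero H hH f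
        have h2 : ⟪f, H f⟫ = (starRingEnd ℂ) ⟪H f, f⟫ := (inner_conj_symm _ _).symm
        rw [h2, Complex.conj_im, h1, neg_zero]
      have him := congrArg Complex.im hinner
      rw [himV] at him
      have hzim : (⟪f, H f⟫ - z * (‖f‖ ^ 2 : ℝ)).im = -(z.im * ‖f‖ ^ 2) := by
        simp [Complex.sub_im, Complex.mul_im, himH, Complex.ofReal_re, Complex.ofReal_im, ← Complex.ofReal_pow]
      rw [Complex.mul_im, hμim, hzim] at him
      have hre : μ.re ≠ 0 := by
        intro h
        exact hμ0 (Complex.ext h hμim)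
      have hnf : ‖f‖ ^ 2 ≠ 0 := by
        simpa using pow_ne_zero 2 (norm_ne_zero_iff.mpr hf0)
      have : μ.re * (z.im * ‖f‖ ^ 2) = 0 := by linarith [him]
      rcases mul_eq_zero.mp this with h | h
      · exact hre h
      · rcases mul_eq_zero.mp h with h' | h'
        · exact hz h'
        · exact hnf h'
    · intro f hsq
      -- hsq : (R ∘ V) ((R ∘ V) f) = 0
      have hVg : V (R (V f)) = 0 := by
        have h1 : R (V (R (V f))) = 0 := by
          simpa [ContinuousLinearMap.mul_apply] using hsq
        have h2 := congrArg (fun x => (H - z • 1) x) h1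
        simp only [map_zero] at h2
        have h3 := congrArg (fun T : E →L[ℂ] E => T (V (R (V f)))) hRr
        simp only [ContinuousLinearMap.mul_apply, ContinuousLinearMap.one_apply] at h3
        rw [← h3]
        exact h2
      have hinner0 : ⟪V f, R (V f)⟫ = 0 := by
        have hs : (V : E →ₗ[ℂ] E).IsSymmetric :=
          (ContinuousLinearMap.isSelfAdjoint_iff_isSymmetric).mp hV
        have : ⟪V f, R (V f)⟫ = ⟪f, V (R (V f))⟫ := hs f (R (V f))
        rw [this, hVg, inner_zero_right]
      have him := im_inner_resolvent H hH z hu (V f)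
      rw [show (Ring.inverse (H - z • 1) : E →L[ℂ] E) = R from rfl] at him
      rw [hinner0] at him
      simp only [Complex.zero_im] at him
      have : ‖R (V f)‖ ^ 2 = 0 := by
        rcases mul_eq_zero.mp him.symm with h | h
        · exact absurd h hz
        · exact h
      have hRVf : R (V f) = 0 := by
        have := pow_eq_zero_iff (n := 2) (by norm_num) |>.mp this
        exact norm_eq_zero.mp this
      simpa [ContinuousLinearMap.mul_apply] using hRVf
  · -- non-unit case: Ring.inverse is 0
    have h0 : R = 0 := Ring.inverse_non_unit _ hu
    constructor
    · intro μ hμim hμ0 heig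
      obtain ⟨f, hf⟩ := heig.exists_hasEigenvector
      have happ : (R * V) f = μ • f := hf.apply_eq_smul
      rw [h0, zero_mul] at happ
      have : μ • f = 0 := by simpa using happ.symm
      rcases smul_eq_zero.mp this with h | h
      · exact hμ0 h
      · exact hf.right h
    · intro f _
      show (R * V) f = 0
      rw [h0, zero_mul]
      rfl
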